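/- Let σ: ℝⁿ × ℝⁿ × ℝⁿ → ℝ (n ≥ 4) be a trilinear fully symmetric function with components σ_{ijk} in an orthonormal basis. Define H^i := Σ_j σ_{jji} and the algebraic curvature tensor R̃_{ijkl} := Σ_m (σ_{ikm}σ_{jlm} - σ_{ilm}σ_{jkm}). Then for every orthonormal frame {e₁,...,eₙ}: R̃₁₂₁₂ + R̃₁₂₃₄ ≥ (1/2)[ (6/(2n+3)) Σ_i (H^i)² - Σ_{i,j,k} σ_{ijk}² ]. -/

import Mathlib

open Finset

namespace Stmt1Aux

variable {n : ℕ}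

private lemma esplit (F : Finset (Fin n)) (f : Fin n → ℝ) (p : Fin n) (hp : p ∈ F) :
    ∑ j ∈ F, f j = f p + ∑ j ∈ F.erase p, f j :=
  (Finset.add_sum_erase F f hp).symm

private lemma extract3 (F : Finset (Fin n)) (g : Fin n → ℝ) (hg : ∀ j, 0 ≤ g j)
    (u v w : Fin n) (hu : u ∈ F) (hv : v ∈ F.erase u) (hw : w ∈ (F.erase u).erase v) :
    g u + g v + g w ≤ ∑ j ∈ F, g j := by
  rw [esplit F g u hu, esplit _ g v hv, esplit _ g w hw]
  have h0 : (0:ℝ) ≤ ∑ j ∈ ((F.erase u).erase v).erase w, g j :=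
    Finset.sum_nonneg fun j _ => hg j
  linarith

private lemma cs3a (F : Finset (Fin n)) (w : Fin n → ℝ) (p q : ℝ) :
    (p + q + ∑ j ∈ F, w j) ^ 2
      ≤ (1/2 + 1 + (F.card : ℝ)/3) * (2*p^2 + q^2 + 3 * ∑ j ∈ F, (w j)^2) := by
  have hW : (0:ℝ) ≤ ∑ j ∈ F, (w j)^2 := Finset.sum_nonneg fun j _ => sq_nonneg _
  have hr : (∑ j ∈ F, w j)^2 ≤ (F.card : ℝ) * ∑ j ∈ F, (w j)^2 := by
    exact sq_sum_le_card_mul_sum_sq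
  rcases F.eq_empty_or_nonempty with hF | hF
  · subst hF; simp; nlinarith [sq_nonneg (2*p - q)]
  · have hk : (1:ℝ) ≤ F.card := by exact_mod_cast Finset.card_pos.mpr hF
    set r := ∑ j ∈ F, w j with hrdef
    set W := ∑ j ∈ F, (w j)^2 with hWdef
    set k := (F.card:ℝ) with hkdef
    have hk0 : (0:ℝ) < k := lt_of_lt_of_le one_pos hk
    have t2 : 0 ≤ (2*k/3)*p^2 + (3/2)*W - 2*p*r := by
      nlinarith [hr, sq_nonneg (2*k*p - 3*r), hk0, hW]
    have t3 : 0 ≤ (k/3)*q^2 + 3*W - 2*q*r := by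
      nlinarith [hr, sq_nonneg (k*q - 3*r), hk0, hW]
    nlinarith [t2, t3, hr, sq_nonneg (2*p - q)]

private lemma cs3b (F : Finset (Fin n)) (w : Fin n → ℝ) (p q : ℝ) :
    (p + q + ∑ j ∈ F, w j) ^ 2
      ≤ (1 + 2/3 + (F.card : ℝ)/3) * (p^2 + (3/2)*q^2 + 3 * ∑ j ∈ F, (w j)^2) := by
  have hW : (0:ℝ) ≤ ∑ j ∈ F, (w j)^2 := Finset.sum_nonneg fun j _ => sq_nonneg _
  have hr : (∑ j ∈ F, w j)^2 ≤ (F.card : ℝ) * ∑ j ∈ F, (w j)^2 := by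
    exact sq_sum_le_card_mul_sum_sq
  rcases F.eq_empty_or_nonempty with hF | hF
  · subst hF; simp; nlinarith [sq_nonneg (2*p - 3*q)]
  · have hk : (1:ℝ) ≤ F.card := by exact_mod_cast Finset.card_pos.mpr hF
    set r := ∑ j ∈ F, w j with hrdef
    set W := ∑ j ∈ F, (w j)^2 with hWdef
    set k := (F.card:ℝ) with hkdef
    have hk0 : (0:ℝ) < k := lt_of_lt_of_le one_pos hk
    have t2 : 0 ≤ (k/3)*p^2 + 3*W - 2*p*r := by
      nlinarith [hr, sq_nonneg (k*p - 3*r), hk0, hW]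
    have t3 : 0 ≤ (k/2)*q^2 + 2*W - 2*q*r := by
      nlinarith [hr, sq_nonneg (k*q - 2*r), hk0, hW]
    nlinarith [t2, t3, hr, sq_nonneg (2*p - 3*q)]

private lemma L1 (hn : 4 ≤ n) (v : Fin n → ℝ) (p q r : Fin n)
    (hqp : q ≠ p) (hrp : r ≠ p) (hqr : q ≠ r) :
    6/(2*(n:ℝ)+3) * (∑ j, v j)^2
      ≤ 3 * ∑ j ∈ univ.erase p, (v j)^2 + (v p)^2 + 2 * (v q * v r)
        - (1/4) * (v q - v r)^2 := by
  classical
  have hmq : q ∈ univ.erase p := by simp [Finset.mem_erase, hqp]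
  have hmr : r ∈ (univ.erase p).erase q := by simp [Finset.mem_erase, hrp, hqr.symm]
  set F : Finset (Fin n) := ((univ.erase p).erase q).erase r with hF
  have hcardF : (F.card : ℝ) = (n:ℝ) - 3 := by
    have : F.card = n - 3 := by
      rw [hF, Finset.card_erase_of_mem hmr, Finset.card_erase_of_mem hmq,
        Finset.card_erase_of_mem (mem_univ p), Finset.card_univ, Fintype.card_fin]
      omega
    rw [this, Nat.cast_sub (by omega)]; norm_num
  have hsplitv : ∀ f : Fin n → ℝ, ∑ j, f j = f p + (f q + (f r + ∑ j ∈ F, f j)) := by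
    intro f
    rw [esplit univ f p (mem_univ p), esplit _ f q hmq, esplit _ f r hmr]
  have hsplit2 : ∀ f : Fin n → ℝ, ∑ j ∈ univ.erase p, f j = f q + (f r + ∑ j ∈ F, f j) := by
    intro f
    rw [esplit _ f q hmq, esplit _ f r hmr]
  have hcs := cs3a F v (v q + v r) (v p)
  have hfac : (1/2 + 1 + (F.card : ℝ)/3) = (2*(n:ℝ)+3)/6 := by
    rw [hcardF]; ring
  have hX : ((v q + v r) + v p + ∑ j ∈ F, v j)^2 = (∑ j, v j)^2 := by
    rw [hsplitv v]; ring_nf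
  have hn3 : (0:ℝ) < 2*(n:ℝ)+3 := by positivity
  have hstep : 6/(2*(n:ℝ)+3) * (∑ j, v j)^2
      ≤ 2*(v q + v r)^2 + (v p)^2 + 3 * ∑ j ∈ F, (v j)^2 := by
    rw [← hX]
    have h6 : 0 < 6/(2*(n:ℝ)+3) := by positivity
    calc 6/(2*(n:ℝ)+3) * ((v q + v r) + v p + ∑ j ∈ F, v j)^2
        ≤ 6/(2*(n:ℝ)+3) * ((2*(n:ℝ)+3)/6 * (2*(v q + v r)^2 + (v p)^2 + 3 * ∑ j ∈ F, (v j)^2)) := by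
          rw [← hfac]; exact mul_le_mul_of_nonneg_left hcs h6.le
      _ = 2*(v q + v r)^2 + (v p)^2 + 3 * ∑ j ∈ F, (v j)^2 := by
          field_simp
  have hbudget : 2*(v q + v r)^2 + (v p)^2 + 3 * ∑ j ∈ F, (v j)^2
      ≤ 3 * ∑ j ∈ univ.erase p, (v j)^2 + (v p)^2 + 2 * (v q * v r) - (1/4) * (v q - v r)^2 := by
    rw [hsplit2 (fun j => (v j)^2)]
    nlinarith [sq_nonneg (v q - v r)]
  linarith

private lemma L2 (hn : 4 ≤ n) (v : Fin n → ℝ) (p q r w : Fin n)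
    (hqp : q ≠ p) (hrp : r ≠ p) (hwp : w ≠ p) (hrq : r ≠ q) (hwq : w ≠ q) (hwr : w ≠ r) :
    6/(2*(n:ℝ)+3) * (∑ j, v j)^2
      ≤ 3 * ∑ j ∈ univ.erase p, (v j)^2 + (v p)^2 + 2 * (v p * v q) - 2*(v q)^2
        - (1/6) * (v r - v w)^2 := by
  classical
  have hmq : q ∈ univ.erase p := by simp [Finset.mem_erase, hqp]
  have hmr : r ∈ (univ.erase p).erase q := by simp [Finset.mem_erase, hrp, hrq]
  have hmw : w ∈ ((univ.erase p).erase q).erase r := by simp [Finset.mem_erase, hwp, hwq, hwr]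
  set F : Finset (Fin n) := (((univ.erase p).erase q).erase r).erase w with hF
  have hcardF : (F.card : ℝ) = (n:ℝ) - 4 := by
    have : F.card = n - 4 := by
      rw [hF, Finset.card_erase_of_mem hmw, Finset.card_erase_of_mem hmr,
        Finset.card_erase_of_mem hmq, Finset.card_erase_of_mem (mem_univ p),
        Finset.card_univ, Fintype.card_fin]
      omega
    rw [this, Nat.cast_sub (by omega)]; norm_num
  have hsplitv : ∀ f : Fin n → ℝ, ∑ j, f j = f p + (f q + (f r + (f w + ∑ j ∈ F, f j))) := by
    intro f
    rw [esplit univ f p (mem_univ p), esplit _ f q hmq, esplit _ f r hmr, esplit _ f w hmw]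
  have hsplit2 : ∀ f : Fin n → ℝ, ∑ j ∈ univ.erase p, f j = f q + (f r + (f w + ∑ j ∈ F, f j)) := by
    intro f
    rw [esplit _ f q hmq, esplit _ f r hmr, esplit _ f w hmw]
  have hcs := cs3b F v (v p + v q) (v r + v w)
  have hX : ((v p + v q) + (v r + v w) + ∑ j ∈ F, v j)^2 = (∑ j, v j)^2 := by
    rw [hsplitv v]; ring_nf
  have hn3 : (0:ℝ) < 2*(n:ℝ)+3 := by positivity
  have hXnn : (0:ℝ) ≤ (v p + v q)^2 + (3/2)*(v r + v w)^2 + 3 * ∑ j ∈ F, (v j)^2 := by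
    have : (0:ℝ) ≤ ∑ j ∈ F, (v j)^2 := Finset.sum_nonneg fun j _ => sq_nonneg _
    positivity
  have hfac : (1 + 2/3 + (F.card : ℝ)/3) = (2*(n:ℝ)+2)/6 := by
    rw [hcardF]; ring
  have hstep : 6/(2*(n:ℝ)+3) * (∑ j, v j)^2
      ≤ (v p + v q)^2 + (3/2)*(v r + v w)^2 + 3 * ∑ j ∈ F, (v j)^2 := by
    rw [← hX]
    have h6 : 0 < 6/(2*(n:ℝ)+3) := by positivity
    calc 6/(2*(n:ℝ)+3) * ((v p + v q) + (v r + v w) + ∑ j ∈ F, v j)^2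
        ≤ 6/(2*(n:ℝ)+3) * ((2*(n:ℝ)+2)/6 * ((v p + v q)^2 + (3/2)*(v r + v w)^2 + 3 * ∑ j ∈ F, (v j)^2)) := by
          rw [← hfac]; exact mul_le_mul_of_nonneg_left hcs h6.le
      _ = (2*(n:ℝ)+2)/(2*(n:ℝ)+3) * ((v p + v q)^2 + (3/2)*(v r + v w)^2 + 3 * ∑ j ∈ F, (v j)^2) := by
          field_simp
      _ ≤ 1 * ((v p + v q)^2 + (3/2)*(v r + v w)^2 + 3 * ∑ j ∈ F, (v j)^2) := by
          apply mul_le_mul_of_nonneg_right _ hXnn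
          rw [div_le_one hn3]; linarith
      _ = (v p + v q)^2 + (3/2)*(v r + v w)^2 + 3 * ∑ j ∈ F, (v j)^2 := by ring
  have hbudget : (v p + v q)^2 + (3/2)*(v r + v w)^2 + 3 * ∑ j ∈ F, (v j)^2
      ≤ 3 * ∑ j ∈ univ.erase p, (v j)^2 + (v p)^2 + 2 * (v p * v q) - 2*(v q)^2
        - (1/6) * (v r - v w)^2 := by
    rw [hsplit2 (fun j => (v j)^2)]
    nlinarith [sq_nonneg (v r - v w)]
  linarith
set_option maxHeartbeats 2000000 in
private lemma key (hn : 4 ≤ n) (s : Fin n → Fin n → Fin n → ℝ)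
    (h1 : ∀ i j k, s i j k = s j i k) (h2 : ∀ i j k, s i j k = s i k j)
    (a b c d : Fin n) (hab : a ≠ b) (hac : a ≠ c) (had : a ≠ d)
    (hbc : b ≠ c) (hbd : b ≠ d) (hcd : c ≠ d) :
    6/(2*(n:ℝ)+3) * ∑ i, (∑ j, s j j i)^2
      ≤ (∑ i, ∑ j, ∑ k, (s i j k)^2)
        + 2 * (∑ m, (s a a m * s b b m - s a b m * s b a m))
        + 2 * (∑ m, (s a c m * s b d m - s a d m * s b c m)) := by
  classical
  have h3 : ∀ i j k, s i j k = s j k i := fun i j k => (h1 i j k).trans (h2 j i k)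
  have hba := hab.symm; have hca := hac.symm; have hda := had.symm
  have hcb := hbc.symm; have hdb := hbd.symm; have hdc := hcd.symm
  have hmb : b ∈ univ.erase a := by simp [Finset.mem_erase, hba]
  have hmc : c ∈ (univ.erase a).erase b := by simp [Finset.mem_erase, hca, hcb]
  have hmd : d ∈ ((univ.erase a).erase b).erase c := by
    simp [Finset.mem_erase, hda, hdb, hdc]
  set F4 : Finset (Fin n) := (((univ.erase a).erase b).erase c).erase d with hF4
  have split4 : ∀ f : Fin n → ℝ, ∑ i, f i = f a + f b + f c + f d + ∑ i ∈ F4, f i := by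
    intro f
    rw [esplit univ f a (mem_univ a), esplit _ f b hmb, esplit _ f c hmc, esplit _ f d hmd,
      hF4]
    ring
  -- == Step hA ==
  have hA : ∑ m, (s a a m * s b b m - s a b m * s b a m)
      = (∑ i, s a a i * s b b i)
        - ((s a a b)^2 + (s b b a)^2 + (s a b c)^2 + (s a b d)^2
            + ∑ m ∈ F4, (s a b m)^2) := by
    have e0 : ∑ m, (s a a m * s b b m - s a b m * s b a m)
        = (∑ m, s a a m * s b b m) - ∑ m, (s a b m)^2 := by
      rw [← Finset.sum_sub_distrib]
      exact Finset.sum_congr rfl fun m _ => by rw [← h1 a b m]; ring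
    rw [e0, split4 (fun m => (s a b m)^2)]
    beta_reduce
    rw [show s a b a = s a a b from h2 a b a,
      show s a b b = s b b a from (h1 a b b).trans (h2 b a b)]
  -- == Step hB ==
  have hB : ∑ m, (s a c m * s b d m - s a d m * s b c m)
      = s a b c * (s b b d - s a a d) + s a b d * (s a a c - s b b c)
        + s a c d * (s d d b - s c c b) + s b c d * (s c c a - s d d a)
        + ∑ m ∈ F4, (s a c m * s b d m - s a d m * s b c m) := by
    rw [split4 (fun m => s a c m * s b d m - s a d m * s b c m)]
    beta_reduce
    rw [show s a c a = s a a c from h2 a c a,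
      show s b d a = s a b d from (h3 a b d).symm,
      show s a d a = s a a d from h2 a d a,
      show s b c a = s a b c from (h3 a b c).symm,
      show s a c b = s a b c from h2 a c b,
      show s b d b = s b b d from h2 b d b,
      show s a d b = s a b d from h2 a d b,
      show s b c b = s b b c from h2 b c b,
      show s a c c = s c c a from h3 a c c,
      show s b d c = s b c d from h2 b d c,
      show s a d c = s a c d from h2 a d c,
      show s b c c = s c c b from h3 b c c,
      show s b d d = s d d b from h3 b d d,
      show s a d d = s d d a from h3 a d d]
    ring
  -- == Step hP : counting ==
  have hsq : ∀ (i j : Fin n), (0:ℝ) ≤ ∑ k ∈ (univ.erase i).erase j, (s i j k)^2 :=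
    fun i j => Finset.sum_nonneg fun k _ => sq_nonneg _
  -- diagonal part
  have hdiag : ∑ i, ∑ k, (s i i k)^2
      = ∑ i, ((s i i i)^2 + ∑ j ∈ univ.erase i, (s j j i)^2) := by
    rw [Finset.sum_comm]
    exact Finset.sum_congr rfl fun i _ =>
      esplit univ (fun j => (s j j i)^2) i (mem_univ i)
  have hoffsplit : ∑ i, ∑ j, ∑ k, (s i j k)^2
      = (∑ i, ∑ k, (s i i k)^2) + ∑ i, ∑ j ∈ univ.erase i, ∑ k, (s i j k)^2 := by
    rw [← Finset.sum_add_distrib]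
    exact Finset.sum_congr rfl fun i _ =>
      esplit univ (fun j => ∑ k, (s i j k)^2) i (mem_univ i)
  have eW : ∀ i : Fin n, ∑ j ∈ univ.erase i, ∑ k, (s i j k)^2
      = ∑ j ∈ univ.erase i, ((s i i j)^2 + (s j j i)^2
          + ∑ k ∈ (univ.erase i).erase j, (s i j k)^2) := by
    intro i
    refine Finset.sum_congr rfl fun j hj => ?_
    have hji : j ≠ i := (Finset.mem_erase.mp hj).1
    rw [esplit univ (fun k => (s i j k)^2) i (mem_univ i),
      esplit _ (fun k => (s i j k)^2) j (by simp [Finset.mem_erase, hji])]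
    rw [show s i j i = s i i j from h2 i j i,
      show s i j j = s j j i from (h1 i j j).trans (h2 j i j)]
    ring
  have hoff2 : ∑ i, ∑ j ∈ univ.erase i, ((s i i j)^2 + (s j j i)^2
        + ∑ k ∈ (univ.erase i).erase j, (s i j k)^2)
      = (∑ i, ∑ j ∈ univ.erase i, (s i i j)^2)
        + (∑ i, ∑ j ∈ univ.erase i, (s j j i)^2)
        + ∑ i, ∑ j ∈ univ.erase i, ∑ k ∈ (univ.erase i).erase j, (s i j k)^2 := by
    rw [← Finset.sum_add_distrib, ← Finset.sum_add_distrib]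
    refine Finset.sum_congr rfl fun i _ => ?_
    rw [← Finset.sum_add_distrib, ← Finset.sum_add_distrib]
  have t1a : ∑ i, ∑ j ∈ univ.erase i, (s i i j)^2
      = (∑ i, ∑ j, (s i i j)^2) - ∑ i, (s i i i)^2 := by
    rw [← Finset.sum_sub_distrib]
    refine Finset.sum_congr rfl fun i _ => ?_
    rw [esplit univ (fun j => (s i i j)^2) i (mem_univ i)]
    ring
  have t1b : ∑ i, ∑ j ∈ univ.erase i, (s j j i)^2
      = (∑ i, ∑ j, (s j j i)^2) - ∑ i, (s i i i)^2 := by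
    rw [← Finset.sum_sub_distrib]
    refine Finset.sum_congr rfl fun i _ => ?_
    rw [esplit univ (fun j => (s j j i)^2) i (mem_univ i)]
    ring
  have hswap : ∑ i, ∑ j ∈ univ.erase i, (s i i j)^2
      = ∑ i, ∑ j ∈ univ.erase i, (s j j i)^2 := by
    rw [t1a, t1b]
    congr 1
    exact Finset.sum_comm
  -- memberships for other erase chains
  have hm_ab : a ∈ univ.erase b := by simp [Finset.mem_erase, hab]
  have hm_ac : a ∈ univ.erase c := by simp [Finset.mem_erase, hac]
  have hm_ad : a ∈ univ.erase d := by simp [Finset.mem_erase, had]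
  have hm_c_ba : c ∈ (univ.erase b).erase a := by simp [Finset.mem_erase, hca, hcb]
  have hm_d_ba_c : d ∈ ((univ.erase b).erase a).erase c := by
    simp [Finset.mem_erase, hda, hdb, hdc]
  have hm_b_ca : b ∈ (univ.erase c).erase a := by simp [Finset.mem_erase, hba, hbc]
  have hm_d_ca_b : d ∈ ((univ.erase c).erase a).erase b := by
    simp [Finset.mem_erase, hda, hdb, hdc]
  have hm_b_da : b ∈ (univ.erase d).erase a := by simp [Finset.mem_erase, hba, hbd]
  have hm_c_da_b : c ∈ ((univ.erase d).erase a).erase b := by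
    simp [Finset.mem_erase, hca, hcb, hcd]
  -- reversal of Rem
  have hrev : ∀ u v : Fin n, ∑ k ∈ (univ.erase u).erase v, (s u v k)^2
      = ∑ k ∈ (univ.erase v).erase u, (s v u k)^2 := by
    intro u v
    refine Finset.sum_congr ?_ fun k _ => by rw [h1 u v k]
    ext m; simp [Finset.mem_erase]; tauto
  -- evaluations of the six Rem sums
  have hmb2 : b ∈ (univ.erase a).erase c := by simp [Finset.mem_erase, hba, hbc]
  have hmd2 : d ∈ ((univ.erase a).erase c).erase b := by
    simp [Finset.mem_erase, hda, hdb, hdc]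
  have hmb3 : b ∈ (univ.erase a).erase d := by simp [Finset.mem_erase, hba, hbd]
  have hmc3 : c ∈ ((univ.erase a).erase d).erase b := by
    simp [Finset.mem_erase, hca, hcb, hcd]
  have hma4 : a ∈ univ.erase b := hm_ab
  have hma5 : a ∈ (univ.erase b).erase c := by simp [Finset.mem_erase, hab, hac]
  have hmd5 : d ∈ ((univ.erase b).erase c).erase a := by
    simp [Finset.mem_erase, hda, hdb, hdc]
  have hma6 : a ∈ (univ.erase b).erase d := by simp [Finset.mem_erase, hab, had]
  have hmc6 : c ∈ ((univ.erase b).erase d).erase a := by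
    simp [Finset.mem_erase, hca, hcb, hcd]
  have hma7 : a ∈ (univ.erase c).erase d := by simp [Finset.mem_erase, hac, had]
  have hmb7 : b ∈ ((univ.erase c).erase d).erase a := by
    simp [Finset.mem_erase, hba, hbc, hbd]
  have hRab : ∑ k ∈ (univ.erase a).erase b, (s a b k)^2
      = (s a b c)^2 + (s a b d)^2 + ∑ k ∈ F4, (s a b k)^2 := by
    rw [esplit _ (fun k => (s a b k)^2) c hmc, esplit _ (fun k => (s a b k)^2) d hmd, hF4]
    ring
  have hRac : ∑ k ∈ (univ.erase a).erase c, (s a c k)^2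
      = (s a b c)^2 + (s a c d)^2 + ∑ k ∈ F4, (s a c k)^2 := by
    rw [esplit _ (fun k => (s a c k)^2) b hmb2, esplit _ (fun k => (s a c k)^2) d hmd2,
      show (((univ.erase a).erase c).erase b).erase d = F4 by
        rw [hF4]; ext m; simp [Finset.mem_erase]; tauto,
      show s a c b = s a b c from h2 a c b]
    ring
  have hRad : ∑ k ∈ (univ.erase a).erase d, (s a d k)^2
      = (s a b d)^2 + (s a c d)^2 + ∑ k ∈ F4, (s a d k)^2 := by
    rw [esplit _ (fun k => (s a d k)^2) b hmb3, esplit _ (fun k => (s a d k)^2) c hmc3,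
      show (((univ.erase a).erase d).erase b).erase c = F4 by
        rw [hF4]; ext m; simp [Finset.mem_erase]; tauto,
      show s a d b = s a b d from h2 a d b,
      show s a d c = s a c d from h2 a d c]
    ring
  have hRbc : ∑ k ∈ (univ.erase b).erase c, (s b c k)^2
      = (s a b c)^2 + (s b c d)^2 + ∑ k ∈ F4, (s b c k)^2 := by
    rw [esplit _ (fun k => (s b c k)^2) a hma5, esplit _ (fun k => (s b c k)^2) d hmd5,
      show (((univ.erase b).erase c).erase a).erase d = F4 by
        rw [hF4]; ext m; simp [Finset.mem_erase]; tauto,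
      show s b c a = s a b c from (h3 a b c).symm]
    ring
  have hRbd : ∑ k ∈ (univ.erase b).erase d, (s b d k)^2
      = (s a b d)^2 + (s b c d)^2 + ∑ k ∈ F4, (s b d k)^2 := by
    rw [esplit _ (fun k => (s b d k)^2) a hma6, esplit _ (fun k => (s b d k)^2) c hmc6,
      show (((univ.erase b).erase d).erase a).erase c = F4 by
        rw [hF4]; ext m; simp [Finset.mem_erase]; tauto,
      show s b d a = s a b d from (h3 a b d).symm,
      show s b d c = s b c d from h2 b d c]
    ring
  have hRcd : ∑ k ∈ (univ.erase c).erase d, (s c d k)^2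
      = (s a c d)^2 + (s b c d)^2 + ∑ k ∈ F4, (s c d k)^2 := by
    rw [esplit _ (fun k => (s c d k)^2) a hma7, esplit _ (fun k => (s c d k)^2) b hmb7,
      show (((univ.erase c).erase d).erase a).erase b = F4 by
        rw [hF4]; ext m; simp [Finset.mem_erase]; tauto,
      show s c d a = s a c d from (h3 a c d).symm,
      show s c d b = s b c d from (h3 b c d).symm]
    ring
  -- outer extraction of the 12 Rem sums
  have houter := split4 (fun i => ∑ j ∈ univ.erase i,
    ∑ k ∈ (univ.erase i).erase j, (s i j k)^2)
  beta_reduce at houter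
  have htail : (0:ℝ) ≤ ∑ i ∈ F4, ∑ j ∈ univ.erase i,
      ∑ k ∈ (univ.erase i).erase j, (s i j k)^2 :=
    Finset.sum_nonneg fun i _ => Finset.sum_nonneg fun j _ => hsq i j
  have hga := extract3 (univ.erase a)
    (fun j => ∑ k ∈ (univ.erase a).erase j, (s a j k)^2)
    (fun j => hsq a j) b c d hmb hmc hmd
  have hgb := extract3 (univ.erase b)
    (fun j => ∑ k ∈ (univ.erase b).erase j, (s b j k)^2)
    (fun j => hsq b j) a c d hm_ab hm_c_ba hm_d_ba_c
  have hgc := extract3 (univ.erase c)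
    (fun j => ∑ k ∈ (univ.erase c).erase j, (s c j k)^2)
    (fun j => hsq c j) a b d hm_ac hm_b_ca hm_d_ca_b
  have hgd := extract3 (univ.erase d)
    (fun j => ∑ k ∈ (univ.erase d).erase j, (s d j k)^2)
    (fun j => hsq d j) a b c hm_ad hm_b_da hm_c_da_b
  beta_reduce at hga hgb hgc hgd
  have hrba := hrev b a
  have hrca := hrev c a
  have hrcb := hrev c b
  have hrda := hrev d a
  have hrdb := hrev d b
  have hrdc := hrev d c
  -- algebraic splits
  have hTRsplit : ∑ i, ((s i i i)^2 + 3 * ∑ j ∈ univ.erase i, (s j j i)^2)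
      = (∑ i, (s i i i)^2) + 3 * ∑ i, ∑ j ∈ univ.erase i, (s j j i)^2 := by
    rw [Finset.sum_add_distrib, ← Finset.mul_sum]
  have hdiagsplit : ∑ i, ((s i i i)^2 + ∑ j ∈ univ.erase i, (s j j i)^2)
      = (∑ i, (s i i i)^2) + ∑ i, ∑ j ∈ univ.erase i, (s j j i)^2 :=
    Finset.sum_add_distrib
  have hoffeq : ∑ i, ∑ j ∈ univ.erase i, ∑ k, (s i j k)^2
      = (∑ i, ∑ j ∈ univ.erase i, (s i i j)^2)
        + (∑ i, ∑ j ∈ univ.erase i, (s j j i)^2)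
        + ∑ i, ∑ j ∈ univ.erase i, ∑ k ∈ (univ.erase i).erase j, (s i j k)^2 :=
    (Finset.sum_congr rfl fun i _ => eW i).trans hoff2
  have hEXsplit : ∑ m ∈ F4, (2*(s a b m)^2 + (s a c m)^2 + (s b d m)^2
        + (s a d m)^2 + (s b c m)^2)
      = 2*(∑ k ∈ F4, (s a b k)^2) + (∑ k ∈ F4, (s a c k)^2)
        + (∑ k ∈ F4, (s b d k)^2) + (∑ k ∈ F4, (s a d k)^2)
        + (∑ k ∈ F4, (s b c k)^2) := by
    rw [Finset.sum_add_distrib, Finset.sum_add_distrib, Finset.sum_add_distrib,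
      Finset.sum_add_distrib, ← Finset.mul_sum]
  have hnn1 : (0:ℝ) ≤ ∑ k ∈ F4, (s a c k)^2 := Finset.sum_nonneg fun k _ => sq_nonneg _
  have hnn2 : (0:ℝ) ≤ ∑ k ∈ F4, (s a d k)^2 := Finset.sum_nonneg fun k _ => sq_nonneg _
  have hnn3 : (0:ℝ) ≤ ∑ k ∈ F4, (s b c k)^2 := Finset.sum_nonneg fun k _ => sq_nonneg _
  have hnn4 : (0:ℝ) ≤ ∑ k ∈ F4, (s b d k)^2 := Finset.sum_nonneg fun k _ => sq_nonneg _
  have hnn5 : (0:ℝ) ≤ ∑ k ∈ F4, (s c d k)^2 := Finset.sum_nonneg fun k _ => sq_nonneg _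
  have hP : ∑ i, ((s i i i)^2 + 3 * ∑ j ∈ univ.erase i, (s j j i)^2)
      + ∑ m ∈ F4, (2*(s a b m)^2 + (s a c m)^2 + (s b d m)^2
          + (s a d m)^2 + (s b c m)^2)
      + (6*(s a b c)^2 + 6*(s a b d)^2 + 6*(s a c d)^2 + 6*(s b c d)^2)
      ≤ ∑ i, ∑ j, ∑ k, (s i j k)^2 := by
    linarith only [hoffsplit, hdiag, hdiagsplit, hTRsplit, hoffeq, hswap, houter, htail,
      hga, hgb, hgc, hgd, hrba, hrca, hrcb, hrda, hrdb, hrdc,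
      hRab, hRac, hRad, hRbc, hRbd, hRcd, hEXsplit, hnn1, hnn2, hnn3, hnn4, hnn5]
  -- == Step hBlk : per-block estimates ==
  have hLa := L2 hn (fun j => s j j a) a b c d hba hca hda hcb hdb hdc
  have hLb := L2 hn (fun j => s j j b) b a d c hab hdb hcb hda hca hcd
  have hLc := L1 hn (fun j => s j j c) c a b hac hbc hab
  have hLd := L1 hn (fun j => s j j d) d a b had hbd hab
  beta_reduce at hLa hLb hLc hLd
  have hgen : ∀ m ∈ F4, 6/(2*(n:ℝ)+3) * (∑ j, s j j m)^2
      ≤ (s m m m)^2 + 3 * ∑ j ∈ univ.erase m, (s j j m)^2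
        + 2 * (s a a m * s b b m) := by
    intro m hm
    have hm4 : m ≠ d ∧ m ≠ c ∧ m ≠ b ∧ m ≠ a := by
      simpa [hF4, Finset.mem_erase] using hm
    have h := L1 hn (fun j => s j j m) m a b (Ne.symm hm4.2.2.2) (Ne.symm hm4.2.2.1) hab
    beta_reduce at h
    linarith only [h, sq_nonneg (s a a m - s b b m)]
  have hgensum := Finset.sum_le_sum hgen
  have e0 : 6/(2*(n:ℝ)+3) * ∑ i, (∑ j, s j j i)^2
      = ∑ i, 6/(2*(n:ℝ)+3) * (∑ j, s j j i)^2 := Finset.mul_sum _ _ _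
  have e1 := split4 (fun i => 6/(2*(n:ℝ)+3) * (∑ j, s j j i)^2)
  have e2 := split4 (fun i => (s i i i)^2 + 3 * ∑ j ∈ univ.erase i, (s j j i)^2
    + 2 * (s a a i * s b b i))
  beta_reduce at e1 e2
  have e3 : ∑ i, ((s i i i)^2 + 3 * ∑ j ∈ univ.erase i, (s j j i)^2
        + 2 * (s a a i * s b b i))
      = (∑ i, ((s i i i)^2 + 3 * ∑ j ∈ univ.erase i, (s j j i)^2))
        + 2 * ∑ i, (s a a i * s b b i) := by
    rw [Finset.sum_add_distrib, ← Finset.mul_sum]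
  have hBlk : 6/(2*(n:ℝ)+3) * ∑ i, (∑ j, s j j i)^2
      ≤ (∑ i, ((s i i i)^2 + 3 * ∑ j ∈ univ.erase i, (s j j i)^2))
        + 2 * (∑ i, (s a a i * s b b i))
        - 2*(s b b a)^2 - 2*(s a a b)^2
        - (1/4)*(s b b d - s a a d)^2 - (1/4)*(s a a c - s b b c)^2
        - (1/6)*(s d d b - s c c b)^2 - (1/6)*(s c c a - s d d a)^2 := by
    rw [e0]
    linarith only [hLa, hLb, hLc, hLd, hgensum, e1, e2, e3]
  -- == completions ==
  have hcx : (0:ℝ) ≤ 4*(s a b c)^2 + 2*(s a b c)*(s b b d - s a a d)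
      + (1/4)*(s b b d - s a a d)^2 := by
    nlinarith only [sq_nonneg (4*(s a b c) + (s b b d - s a a d))]
  have hcy : (0:ℝ) ≤ 4*(s a b d)^2 + 2*(s a b d)*(s a a c - s b b c)
      + (1/4)*(s a a c - s b b c)^2 := by
    nlinarith only [sq_nonneg (4*(s a b d) + (s a a c - s b b c))]
  have hcz : (0:ℝ) ≤ 6*(s a c d)^2 + 2*(s a c d)*(s d d b - s c c b)
      + (1/6)*(s d d b - s c c b)^2 := by
    nlinarith only [sq_nonneg (6*(s a c d) + (s d d b - s c c b))]
  have hct : (0:ℝ) ≤ 6*(s b c d)^2 + 2*(s b c d)*(s c c a - s d d a)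
      + (1/6)*(s c c a - s d d a)^2 := by
    nlinarith only [sq_nonneg (6*(s b c d) + (s c c a - s d d a))]
  -- == leftover F4 squares from A and B ==
  have hEXB2 : (0:ℝ) ≤ ∑ m ∈ F4, (2*(s a b m)^2 + (s a c m)^2 + (s b d m)^2
        + (s a d m)^2 + (s b c m)^2)
      - 2*(∑ m ∈ F4, (s a b m)^2)
      + 2*(∑ m ∈ F4, (s a c m * s b d m - s a d m * s b c m)) := by
    have e : ∑ m ∈ F4, (2*(s a b m)^2 + (s a c m)^2 + (s b d m)^2
          + (s a d m)^2 + (s b c m)^2)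
        - 2*(∑ m ∈ F4, (s a b m)^2)
        + 2*(∑ m ∈ F4, (s a c m * s b d m - s a d m * s b c m))
        = ∑ m ∈ F4, ((s a c m + s b d m)^2 + (s a d m - s b c m)^2) := by
      rw [Finset.mul_sum, Finset.mul_sum, ← Finset.sum_sub_distrib,
        ← Finset.sum_add_distrib]
      exact Finset.sum_congr rfl fun m _ => by ring
    rw [e]
    exact Finset.sum_nonneg fun m _ => by positivity
  -- == final assembly ==
  linarith only [hP, hA, hB, hBlk, hEXB2, hcx, hcy, hcz, hct]

end Stmt1Aux

open scoped RealInnerProductSpace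

/-- Lemma 3.4: for a symmetric trilinear form `σ` on `ℝⁿ` (`n ≥ 4`), with
`Hⁱ = Σ_j σ_jji` and Gauss-type tensor `R̃_ijkl = Σ_m (σ_ikm σ_jlm - σ_ilm σ_jkm)`,
one has `R̃₁₂₁₂ + R̃₁₂₃₄ ≥ (1/2)[(6/(2n+3)) Σ (Hⁱ)² - Σ σ_ijk²]`
for every orthonormal frame. -/
theorem stmt_1 {n : ℕ} (hn : 4 ≤ n)
    (T : EuclideanSpace ℝ (Fin n) →ₗ[ℝ] EuclideanSpace ℝ (Fin n) →ₗ[ℝ]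
      EuclideanSpace ℝ (Fin n) →ₗ[ℝ] ℝ)
    (hT1 : ∀ x y z, T x y z = T y x z)
    (hT2 : ∀ x y z, T x y z = T x z y)
    (e : Fin n → EuclideanSpace ℝ (Fin n)) (he : Orthonormal ℝ e) :
    let σ : Fin n → Fin n → Fin n → ℝ := fun i j k => T (e i) (e j) (e k)
    let H : Fin n → ℝ := fun i => ∑ j, σ j j i
    let Rt : Fin n → Fin n → Fin n → Fin n → ℝ :=
      fun i j k l => ∑ m, (σ i k m * σ j l m - σ i l m * σ j k m)
    let i₁ : Fin n := ⟨0, by omega⟩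
    let i₂ : Fin n := ⟨1, by omega⟩
    let i₃ : Fin n := ⟨2, by omega⟩
    let i₄ : Fin n := ⟨3, by omega⟩
    (1 / 2 : ℝ) * ((6 / (2 * (n : ℝ) + 3)) * ∑ i, (H i) ^ 2
        - ∑ i, ∑ j, ∑ k, (σ i j k) ^ 2)
      ≤ Rt i₁ i₂ i₁ i₂ + Rt i₁ i₂ i₃ i₄ := by
  intro σ H Rt i₁ i₂ i₃ i₄
  have h1 : ∀ i j k, σ i j k = σ j i k := fun i j k => hT1 (e i) (e j) (e k)
  have h2 : ∀ i j k, σ i j k = σ i k j := fun i j k => hT2 (e i) (e j) (e k)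
  have h12 : i₁ ≠ i₂ := by simp [i₁, i₂, Fin.ext_iff]
  have h13 : i₁ ≠ i₃ := by simp [i₁, i₃, Fin.ext_iff]
  have h14 : i₁ ≠ i₄ := by simp [i₁, i₄, Fin.ext_iff]
  have h23 : i₂ ≠ i₃ := by simp [i₂, i₃, Fin.ext_iff]
  have h24 : i₂ ≠ i₄ := by simp [i₂, i₄, Fin.ext_iff]
  have h34 : i₃ ≠ i₄ := by simp [i₃, i₄, Fin.ext_iff]
  have hk := Stmt1Aux.key hn σ h1 h2 i₁ i₂ i₃ i₄ h12 h13 h14 h23 h24 h34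
  show (1 / 2 : ℝ) * ((6 / (2 * (n : ℝ) + 3)) * ∑ i, (∑ j, σ j j i) ^ 2
        - ∑ i, ∑ j, ∑ k, (σ i j k) ^ 2)
      ≤ (∑ m, (σ i₁ i₁ m * σ i₂ i₂ m - σ i₁ i₂ m * σ i₂ i₁ m))
        + (∑ m, (σ i₁ i₃ m * σ i₂ i₄ m - σ i₁ i₄ m * σ i₂ i₃ m))
  linarith only [hk]
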